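/- Let ε ∈ (0,1], s ∈ ℝ, and let (f_{k,l})_{k≥1, l≥1} be a family of real numbers with Σ_{k≥1, l≥1} (k²+l²)^s f_{k,l}² < ∞. Then Σ_{k≥1, l≥1} [(k²+l²)^s l⁴ / (k² + l²/ε)²] · f_{k,l}² ≤ ε² · Σ_{k≥1, l≥1} (k²+l²)^s f_{k,l}². -/

import Mathlib

/-- Fourier-coefficient form of the estimate `|∂_yy u^ε|_{H^s} ≤ ε |f|_{H^s}`
(case `σ = 0`): for `ε ∈ (0,1]`, indices `k ≥ 1`, `l ≥ 1`
(encoded via `k = p.1 + 1`, `l = p.2 + 1`). -/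
theorem stmt15 (ε s : ℝ) (hε0 : 0 < ε) (hε1 : ε ≤ 1)
    (f : ℕ → ℕ → ℝ)
    (hf : Summable (fun p : ℕ × ℕ =>
      (((p.1 : ℝ) + 1) ^ 2 + ((p.2 : ℝ) + 1) ^ 2) ^ s * f (p.1 + 1) (p.2 + 1) ^ 2)) :
    (∑' p : ℕ × ℕ,
        (((p.1 : ℝ) + 1) ^ 2 + ((p.2 : ℝ) + 1) ^ 2) ^ s * ((p.2 : ℝ) + 1) ^ 4
          / (((p.1 : ℝ) + 1) ^ 2 + ((p.2 : ℝ) + 1) ^ 2 / ε) ^ 2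
          * f (p.1 + 1) (p.2 + 1) ^ 2)
      ≤ ε ^ 2 *
          ∑' p : ℕ × ℕ,
            (((p.1 : ℝ) + 1) ^ 2 + ((p.2 : ℝ) + 1) ^ 2) ^ s
              * f (p.1 + 1) (p.2 + 1) ^ 2 := by
  have key : ∀ p : ℕ × ℕ,
      (((p.1 : ℝ) + 1) ^ 2 + ((p.2 : ℝ) + 1) ^ 2) ^ s * ((p.2 : ℝ) + 1) ^ 4
          / (((p.1 : ℝ) + 1) ^ 2 + ((p.2 : ℝ) + 1) ^ 2 / ε) ^ 2
          * f (p.1 + 1) (p.2 + 1) ^ 2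
      ≤ ε ^ 2 * ((((p.1 : ℝ) + 1) ^ 2 + ((p.2 : ℝ) + 1) ^ 2) ^ s
          * f (p.1 + 1) (p.2 + 1) ^ 2) := by
    intro p
    set k : ℝ := (p.1 : ℝ) + 1 with hk
    set l : ℝ := (p.2 : ℝ) + 1 with hl
    have hkpos : (0:ℝ) < k := by positivity
    have hlpos : (0:ℝ) < l := by positivity
    have hw : (0:ℝ) < k ^ 2 + l ^ 2 := by positivity
    have hws : (0:ℝ) ≤ (k ^ 2 + l ^ 2) ^ s := Real.rpow_nonneg hw.le s
    have hD : (0:ℝ) < k ^ 2 + l ^ 2 / ε := by positivity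
    have hratio : l ^ 4 / (k ^ 2 + l ^ 2 / ε) ^ 2 ≤ ε ^ 2 := by
      rw [div_le_iff₀ (by positivity)]
      have h1 : l ^ 2 / ε ≤ k ^ 2 + l ^ 2 / ε := by nlinarith
      have h2 : (l ^ 2 / ε) ^ 2 ≤ (k ^ 2 + l ^ 2 / ε) ^ 2 := by
        apply pow_le_pow_left₀ (by positivity) h1
      have : l ^ 4 = ε ^ 2 * (l ^ 2 / ε) ^ 2 := by
        field_simp
      rw [this]
      exact mul_le_mul_of_nonneg_left h2 (by positivity)
    have hf2 : (0:ℝ) ≤ f (p.1 + 1) (p.2 + 1) ^ 2 := sq_nonneg _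
    calc (k ^ 2 + l ^ 2) ^ s * l ^ 4 / (k ^ 2 + l ^ 2 / ε) ^ 2
          * f (p.1 + 1) (p.2 + 1) ^ 2
        = ((k ^ 2 + l ^ 2) ^ s * (l ^ 4 / (k ^ 2 + l ^ 2 / ε) ^ 2))
          * f (p.1 + 1) (p.2 + 1) ^ 2 := by ring
      _ ≤ ((k ^ 2 + l ^ 2) ^ s * ε ^ 2) * f (p.1 + 1) (p.2 + 1) ^ 2 := by
          apply mul_le_mul_of_nonneg_right _ hf2
          exact mul_le_mul_of_nonneg_left hratio hws
      _ = ε ^ 2 * ((k ^ 2 + l ^ 2) ^ s * f (p.1 + 1) (p.2 + 1) ^ 2) := by ring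
  have hnonneg : ∀ p : ℕ × ℕ,
      (0:ℝ) ≤ (((p.1 : ℝ) + 1) ^ 2 + ((p.2 : ℝ) + 1) ^ 2) ^ s * ((p.2 : ℝ) + 1) ^ 4
          / (((p.1 : ℝ) + 1) ^ 2 + ((p.2 : ℝ) + 1) ^ 2 / ε) ^ 2
          * f (p.1 + 1) (p.2 + 1) ^ 2 := by
    intro p
    have : (0:ℝ) ≤ (((p.1 : ℝ) + 1) ^ 2 + ((p.2 : ℝ) + 1) ^ 2) ^ s :=
      Real.rpow_nonneg (by positivity) s
    positivity
  have hsum2 := hf.mul_left (ε ^ 2)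
  have hsum1 : Summable (fun p : ℕ × ℕ =>
      (((p.1 : ℝ) + 1) ^ 2 + ((p.2 : ℝ) + 1) ^ 2) ^ s * ((p.2 : ℝ) + 1) ^ 4
        / (((p.1 : ℝ) + 1) ^ 2 + ((p.2 : ℝ) + 1) ^ 2 / ε) ^ 2
        * f (p.1 + 1) (p.2 + 1) ^ 2) :=
    Summable.of_nonneg_of_le hnonneg key hsum2
  calc _ ≤ ∑' p : ℕ × ℕ, ε ^ 2 * ((((p.1 : ℝ) + 1) ^ 2 + ((p.2 : ℝ) + 1) ^ 2) ^ s
        * f (p.1 + 1) (p.2 + 1) ^ 2) := Summable.tsum_le_tsum key hsum1 hsum2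
    _ = _ := tsum_mul_left
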